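/- Let β ∈ (0, 1) and define the geometric rank-discounted value V(X) = Σ_{k=1}^{|X|} β^k·X_k. Let W ⊆ ℝ, and let Z₀ be a population that covers W, meaning: (a) for all w₁, w₂ ∈ W with w₁ < w₂ there is z with Z₀(z) ≠ 0 and w₁ < z < w₂; (b) there is z with Z₀(z) ≠ 0 and z < w for all w ∈ W; (c) there is z with Z₀(z) ≠ 0 and z > w for all w ∈ W. Let c be the greatest welfare level occurring in Z₀ (i.e., the maximum of the finite set {z : Z₀(z) ≠ 0}). For populations X and Y, say X ≻_CLLc Y if, letting m = max(|X|, |Y|), X̃ be X with m − |X| additional subjects at welfare level c, and Ỹ be Y with m − |Y| additional subjects at welfare level c (so |X̃| = |Ỹ| = m), there exists k ∈ {1, …, m} with X̃_j = Ỹ_j for all j < k and X̃_k > Ỹ_k. Then for all populations X and Y supported on W (i.e., X(w) ≠ 0 implies w ∈ W, and likewise for Y) with X ≻_CLLc Y, there exists N ∈ ℕ such that V(X + n·Z₀) > V(Y + n·Z₀) for every integer n ≥ N. -/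

import Mathlib

open Finset List

/-- The size of a population: total number of welfare subjects. -/
noncomputable def psize (X : ℝ →₀ ℕ) : ℕ := X.sum fun _ n => n

/-- Total welfare of a population. -/
noncomputable def ptot (X : ℝ →₀ ℕ) : ℝ := X.sum fun w n => (n : ℝ) * w

/-- The welfare levels of a population, with multiplicity, sorted in increasing order.
The `k`-th worst-off individual (1-indexed) has welfare `(ranked X).getD (k-1) 0`. -/
noncomputable def ranked (X : ℝ →₀ ℕ) : List ℝ :=
  (Finsupp.toMultiset X).sort (· ≤ ·)

/-- Rank-discounted value: `Σ_{k=1}^{|X|} f(k) · X_k`, where `X_k` is the `k`-th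
smallest welfare level of `X` counted with multiplicity. -/
noncomputable def vrd (f : ℕ → ℝ) (X : ℝ →₀ ℕ) : ℝ :=
  ∑ k ∈ Finset.range (ranked X).length, f (k + 1) * (ranked X).getD k 0

/-- Pad a population `X` up to size `m` with extra welfare subjects at level `c`. -/
noncomputable def padTo (X : ℝ →₀ ℕ) (m : ℕ) (c : ℝ) : ℝ →₀ ℕ :=
  X + Finsupp.single c (m - psize X)

/-- Critical-level leximin betterness at critical level `c`: after padding both
populations with subjects at level `c` to a common size `m`, the first rank at which
they differ favours `X`. -/
def CLLBetter (c : ℝ) (X Y : ℝ →₀ ℕ) : Prop :=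
  ∃ k < max (psize X) (psize Y),
    (∀ j < k, (ranked (padTo X (max (psize X) (psize Y)) c)).getD j 0
            = (ranked (padTo Y (max (psize X) (psize Y)) c)).getD j 0) ∧
    (ranked (padTo X (max (psize X) (psize Y)) c)).getD k 0
      > (ranked (padTo Y (max (psize X) (psize Y)) c)).getD k 0

/-! ### Auxiliary lemmas -/

noncomputable def Gg (β : ℝ) (t M : ℕ) : ℝ := ∑ j ∈ Finset.Ico t M, β ^ (j+1)

lemma Gg_nonneg {β : ℝ} (hβ : 0 ≤ β) (t M : ℕ) : 0 ≤ Gg β t M :=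
  Finset.sum_nonneg fun _ _ => pow_nonneg hβ _

lemma Gg_mono {β : ℝ} (hβ : 0 ≤ β) {t t' : ℕ} (h : t ≤ t') (M : ℕ) :
    Gg β t' M ≤ Gg β t M := by
  apply Finset.sum_le_sum_of_subset_of_nonneg
  · exact Finset.Ico_subset_Ico h le_rfl
  · exact fun _ _ _ => pow_nonneg hβ _

lemma Gg_pred {β : ℝ} {t M : ℕ} (ht : 0 < t) (htM : t ≤ M) :
    Gg β (t-1) M = β ^ t + Gg β t M := by
  unfold Gg
  rw [Finset.sum_eq_sum_Ico_succ_bot (by omega)]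
  have h1 : t - 1 + 1 = t := by omega
  rw [h1]

lemma Gg_le {β : ℝ} (hβ0 : 0 < β) (hβ1 : β < 1) (t M : ℕ) :
    Gg β t M ≤ β ^ t * (1 - β)⁻¹ := by
  unfold Gg
  have hb : (0:ℝ) < 1 - β := by linarith
  rw [Finset.sum_Ico_eq_sum_range]
  have h0 : ∀ j ∈ Finset.range (M - t), β ^ (t + j + 1) = β ^ t * β * β ^ j := by
    intro j _; ring
  rw [Finset.sum_congr rfl h0, ← Finset.mul_sum]
  rw [geom_sum_eq (ne_of_lt hβ1)]
  have h1 : (β ^ (M - t) - 1) / (β - 1) = (1 - β ^ (M-t)) / (1 - β) := by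
    rw [div_eq_div_iff (by linarith) (by linarith)]; ring
  rw [h1]
  have h2 : (1 - β ^ (M-t)) / (1 - β) ≤ 1 / (1 - β) := by
    gcongr
    have := pow_nonneg hβ0.le (M - t); linarith
  calc β ^ t * β * ((1 - β ^ (M - t)) / (1 - β)) ≤ β ^ t * 1 * (1 / (1-β)) := by
        apply mul_le_mul
        · exact mul_le_mul_of_nonneg_left (le_of_lt hβ1) (pow_nonneg hβ0.le _)
        · exact h2
        · apply div_nonneg _ hb.le
          have := pow_le_one₀ hβ0.le hβ1.le (n := M - t); linarith
        · positivity
    _ = β ^ t * (1 - β)⁻¹ := by rw [mul_one, one_div]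

lemma sorted_getD_mono {L : List ℝ} (h : L.Pairwise (· ≤ ·)) {i j : ℕ} (hij : i ≤ j)
    (hj : j < L.length) : L.getD i 0 ≤ L.getD j 0 := by
  rw [List.getD_eq_getElem L 0 (lt_of_le_of_lt hij hj), List.getD_eq_getElem L 0 hj]
  exact h.sortedLE.monotone_get (by exact hij)

lemma sorted_countP_iff : ∀ (L : List ℝ), L.Pairwise (· ≤ ·) → ∀ (s : ℝ), ∀ j < L.length,
    (L.getD j 0 ≤ s ↔ j < L.countP (fun x => decide (x ≤ s)))
  | [], _, s, j, hj => by simp at hj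
  | (x :: xs), hL, s, j, hj => by
    rw [List.pairwise_cons] at hL
    rw [List.countP_cons]
    by_cases hx : x ≤ s
    · rw [if_pos (decide_eq_true hx)]
      cases j with
      | zero => simpa using hx
      | succ j =>
        simp only [List.getD_cons_succ]
        rw [sorted_countP_iff xs hL.2 s j (by simpa using hj)]
        omega
    · have h0 : xs.countP (fun x => decide (x ≤ s)) = 0 := by
        rw [List.countP_eq_zero]
        intro y hy
        simpa using fun h => hx (le_trans (hL.1 y hy) h)
      rw [if_neg (by simpa using hx), h0]
      simp only [Nat.add_zero, Nat.not_lt_zero, iff_false]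
      · intro h
        cases j with
        | zero => exact hx (by simpa using h)
        | succ j =>
          simp only [List.getD_cons_succ] at h
          refine hx (le_trans (hL.1 _ ?_) h)
          rw [List.getD_eq_getElem xs 0 (by simpa using hj)]
          exact List.getElem_mem _
  termination_by L => L.length

lemma countP_lt_countP {l : List ℝ} {p q : ℝ → Bool}
    (hpq : ∀ x ∈ l, p x = true → q x = true) {x : ℝ} (hx : x ∈ l)
    (hqx : q x = true) (hpx : ¬ p x = true) : l.countP p < l.countP q := by
  induction l with
  | nil => simp at hx
  | cons y ys ih =>
    rw [List.countP_cons, List.countP_cons]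
    rcases List.mem_cons.mp hx with rfl | hx'
    · rw [if_pos hqx, if_neg hpx]
      have := List.countP_mono_left (l := ys) (fun z hz => hpq z (List.mem_cons_of_mem _ hz))
      omega
    · have h1 := ih (fun z hz h => hpq z (List.mem_cons_of_mem _ hz) h) hx'
      have h2 : (if p y = true then 1 else 0) ≤ (if q y = true then 1 else 0) := by
        by_cases h : p y = true
        · rw [if_pos h, if_pos (hpq y (List.mem_cons_self) h)]
        · rw [if_neg h]; omega
      omega

lemma indicator_sum {β : ℝ} {L : List ℝ} (hL : L.Pairwise (· ≤ ·)) (s : ℝ) :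
    ∑ j ∈ Finset.range L.length, β^(j+1) * (if s < L.getD j 0 then 1 else 0)
      = Gg β (L.countP (fun x => decide (x ≤ s))) L.length := by
  unfold Gg
  rw [Finset.sum_congr rfl (g := fun j => if L.countP (fun x => decide (x ≤ s)) ≤ j then β^(j+1) else 0)]
  · rw [Finset.sum_ite, Finset.sum_const, smul_zero, add_zero]
    apply Finset.sum_congr _ (fun _ _ => rfl)
    ext j
    simp only [Finset.mem_filter, Finset.mem_range, Finset.mem_Ico]
    omega
  · intro j hj
    rw [mul_ite, mul_one, mul_zero]
    apply if_congr _ rfl rfl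
    rw [← not_le, ← not_lt (a := j)]
    exact not_congr (sorted_countP_iff L hL s j (Finset.mem_range.mp hj))

lemma grid_repr {SL : List ℝ} (hSL : SL.Pairwise (· < ·)) {v : ℝ} (hv : v ∈ SL) :
    v = SL.getD 0 0 + ∑ i ∈ Finset.range (SL.length - 1),
      (SL.getD (i+1) 0 - SL.getD i 0) * (if SL.getD i 0 < v then 1 else 0) := by
  obtain ⟨t, ht, rfl⟩ := List.mem_iff_get.mp hv
  have hmono : StrictMono (SL.get) := hSL.sortedLT.strictMono_get
  have hcond : ∀ i (hi : i < SL.length), (SL.getD i 0 < SL.get t ↔ i < t.1) := by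
    intro i hi
    rw [List.getD_eq_getElem SL 0 hi]
    constructor
    · intro h
      by_contra hc
      push_neg at hc
      have : SL.get t ≤ SL[i] := hmono.le_iff_le.mpr (by exact hc)
      linarith
    · intro h
      exact hmono (by exact h)
  have hsum : ∑ i ∈ Finset.range (SL.length - 1),
      (SL.getD (i+1) 0 - SL.getD i 0) * (if SL.getD i 0 < SL.get t then 1 else 0)
      = ∑ i ∈ Finset.range t.1, (SL.getD (i+1) 0 - SL.getD i 0) := by
    rw [Finset.sum_congr rfl (g := fun i => if i < t.1 then SL.getD (i+1) 0 - SL.getD i 0 else 0)]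
    · rw [Finset.sum_ite, Finset.sum_const, smul_zero, add_zero]
      apply Finset.sum_congr _ (fun _ _ => rfl)
      ext i
      simp only [Finset.mem_filter, Finset.mem_range]
      have := t.2
      omega
    · intro i hi
      rw [mul_ite, mul_one, mul_zero]
      exact if_congr (hcond i (by have := Finset.mem_range.mp hi; omega)) rfl rfl
  rw [hsum, Finset.sum_range_sub (fun i => SL.getD i 0) t.1]
  rw [List.getD_eq_getElem SL 0 t.2]
  simp

lemma layer {β : ℝ} {SL L : List ℝ} (hSL : SL.Pairwise (· < ·)) (hL : L.Pairwise (· ≤ ·))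
    (hmem : ∀ x ∈ L, x ∈ SL) :
    ∑ j ∈ Finset.range L.length, β^(j+1) * L.getD j 0
      = (SL.getD 0 0) * (∑ j ∈ Finset.range L.length, β^(j+1))
        + ∑ i ∈ Finset.range (SL.length - 1),
            (SL.getD (i+1) 0 - SL.getD i 0)
              * Gg β (L.countP (fun x => decide (x ≤ SL.getD i 0))) L.length := by
  have step1 : ∀ j ∈ Finset.range L.length,
      β^(j+1) * L.getD j 0
        = β^(j+1) * SL.getD 0 0 + ∑ i ∈ Finset.range (SL.length - 1),
            (SL.getD (i+1) 0 - SL.getD i 0) * (β^(j+1) * (if SL.getD i 0 < L.getD j 0 then 1 else 0)) := by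
    intro j hj
    have hjlen := Finset.mem_range.mp hj
    have hLj : L.getD j 0 ∈ SL := by
      apply hmem
      rw [List.getD_eq_getElem L 0 hjlen]
      exact List.getElem_mem _
    calc β^(j+1) * L.getD j 0
        = β^(j+1) * (SL.getD 0 0 + ∑ i ∈ Finset.range (SL.length - 1),
            (SL.getD (i+1) 0 - SL.getD i 0) * (if SL.getD i 0 < L.getD j 0 then 1 else 0)) := by
          rw [← grid_repr hSL hLj]
      _ = _ := by
          rw [mul_add, Finset.mul_sum]
          congr 1
          apply Finset.sum_congr rfl
          intro i _
          ring
  rw [Finset.sum_congr rfl step1, Finset.sum_add_distrib]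
  congr 1
  · rw [Finset.mul_sum]
    apply Finset.sum_congr rfl
    intro j _; ring
  · rw [Finset.sum_comm]
    apply Finset.sum_congr rfl
    intro i _
    rw [← Finset.mul_sum, indicator_sum hL]

lemma psize_card (A : ℝ →₀ ℕ) : psize A = Multiset.card (Finsupp.toMultiset A) := by
  rw [Finsupp.card_toMultiset]; rfl

lemma ranked_sorted (A : ℝ →₀ ℕ) : (ranked A).Pairwise (· ≤ ·) := Multiset.pairwise_sort _ _

lemma ranked_length (A : ℝ →₀ ℕ) : (ranked A).length = psize A := by
  rw [psize_card, ← Multiset.length_sort (· ≤ ·)]; rfl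

lemma mem_ranked {A : ℝ →₀ ℕ} {x : ℝ} : x ∈ ranked A ↔ x ∈ A.support := by
  rw [ranked, Multiset.mem_sort, Finsupp.mem_toMultiset]

lemma ranked_coe (A : ℝ →₀ ℕ) : (↑(ranked A) : Multiset ℝ) = Finsupp.toMultiset A :=
  Multiset.sort_eq _ _

lemma ranked_perm_add (A B : ℝ →₀ ℕ) : (ranked (A + B)).Perm (ranked A ++ ranked B) := by
  rw [← Multiset.coe_eq_coe]
  rw [← Multiset.coe_add, ranked_coe, ranked_coe, ranked_coe, Finsupp.toMultiset_add]

lemma countP_ranked_add (p : ℝ → Bool) (A B : ℝ →₀ ℕ) :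
    (ranked (A + B)).countP p = (ranked A).countP p + (ranked B).countP p := by
  rw [(ranked_perm_add A B).countP_eq, List.countP_append]

lemma countP_ranked_nsmul (p : ℝ → Bool) (Z : ℝ →₀ ℕ) (n : ℕ) :
    (ranked (n • Z)).countP p = n * (ranked Z).countP p := by
  induction n with
  | zero =>
    have : (0 : ℝ →₀ ℕ).toMultiset = 0 := map_zero _
    simp [ranked, this]
  | succ n ih =>
    rw [succ_nsmul, countP_ranked_add, ih]
    ring

lemma psize_add (A B : ℝ →₀ ℕ) : psize (A + B) = psize A + psize B := by
  rw [psize_card, psize_card, psize_card, Finsupp.toMultiset_add, Multiset.card_add]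

lemma psize_nsmul (Z : ℝ →₀ ℕ) (n : ℕ) : psize (n • Z) = n * psize Z := by
  induction n with
  | zero => simp [psize]
  | succ n ih => rw [succ_nsmul, psize_add, ih]; ring

lemma psize_single (c : ℝ) (d : ℕ) : psize (Finsupp.single c d) = d := by
  rw [psize_card, Finsupp.toMultiset_single]
  simp

lemma ranked_pad (A : ℝ →₀ ℕ) (c : ℝ) (d : ℕ) (hc : ∀ x ∈ ranked A, x ≤ c) :
    ranked (A + Finsupp.single c d) = ranked A ++ List.replicate d c := by
  refine List.Perm.eq_of_pairwise' (ranked_sorted _) ?_ ?_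
  swap
  · rw [← Multiset.coe_eq_coe, ← Multiset.coe_add, ranked_coe, ranked_coe,
      Finsupp.toMultiset_add, Finsupp.toMultiset_single, Multiset.coe_replicate]
    congr 1
    exact Multiset.nsmul_singleton c d
  · rw [List.pairwise_append]
    refine ⟨ranked_sorted A, ?_, ?_⟩
    · exact List.pairwise_replicate.mpr (Or.inr le_rfl)
    · intro x hx y hy
      rw [List.eq_of_mem_replicate hy]
      exact hc x hx

lemma T_append (β c : ℝ) (d : ℕ) (L : List ℝ) :
    ∑ j ∈ Finset.range (L.length + d), β^(j+1) * (L ++ List.replicate d c).getD j 0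
      = (∑ j ∈ Finset.range L.length, β^(j+1) * L.getD j 0) + c * Gg β L.length (L.length + d) := by
  rw [Finset.range_eq_Ico,
    ← Finset.sum_Ico_consecutive _ (Nat.zero_le L.length) (Nat.le_add_right _ d)]
  congr 1
  · rw [← Finset.range_eq_Ico]
    apply Finset.sum_congr rfl
    intro j hj
    rw [List.getD_append _ _ _ _ (Finset.mem_range.mp hj)]
  · rw [Gg, Finset.mul_sum]
    apply Finset.sum_congr rfl
    intro j hj
    have hj' := Finset.mem_Ico.mp hj
    rw [List.getD_append_right _ _ _ _ hj'.1]
    have hlt : j - L.length < d := by omega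
    rw [List.getD_eq_getElem _ 0 (by simpa using hlt), List.getElem_replicate]
    ring

lemma countP_le_of_prefix {RX RY : List ℝ} (hRXs : RX.Pairwise (· ≤ ·)) (hRYs : RY.Pairwise (· ≤ ·))
    {k : ℕ} (hkX : k < RX.length) (hkY : k < RY.length)
    (hpre : ∀ j < k, RX.getD j 0 = RY.getD j 0) {s : ℝ} (hs : s < RX.getD k 0) :
    RX.countP (fun x => decide (x ≤ s)) ≤ RY.countP (fun x => decide (x ≤ s)) := by
  set t := RX.countP (fun x => decide (x ≤ s)) with ht
  rcases Nat.eq_zero_or_pos t with h0 | h0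
  · omega
  have htlen : t ≤ RX.length := List.countP_le_length
  have h1 : RX.getD (t-1) 0 ≤ s := by
    rw [sorted_countP_iff RX hRXs s (t-1) (by omega)]
    omega
  have h2 : t - 1 < k := by
    by_contra hcon
    push_neg at hcon
    have := sorted_getD_mono hRXs hcon (by omega)
    linarith
  have h3 : RY.getD (t-1) 0 ≤ s := by rw [← hpre (t-1) h2]; exact h1
  have := (sorted_countP_iff RY hRYs s (t-1) (by omega)).mp h3
  omega

lemma toMultiset_nsmul (Z : ℝ →₀ ℕ) (n : ℕ) :
    Finsupp.toMultiset (n • Z) = n • Finsupp.toMultiset Z := by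
  induction n with
  | zero => simp
  | succ n ih => rw [succ_nsmul, Finsupp.toMultiset_add, ih, succ_nsmul]

lemma support_nsmul_subset (Z : ℝ →₀ ℕ) (n : ℕ) : (n • Z).support ⊆ Z.support := by
  intro x hx
  have h1 : x ∈ Finsupp.toMultiset (n • Z) := (Finsupp.mem_toMultiset _ _).mpr hx
  rw [toMultiset_nsmul, Multiset.mem_nsmul] at h1
  exact (Finsupp.mem_toMultiset _ _).mp h1.2

set_option maxHeartbeats 1000000 in
theorem stmt_15 (β : ℝ) (hβ0 : 0 < β) (hβ1 : β < 1)
    (V : (ℝ →₀ ℕ) → ℝ)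
    (hV : ∀ X : ℝ →₀ ℕ, V X = vrd (fun k => β ^ k) X)
    (W : Set ℝ) (Z₀ : ℝ →₀ ℕ) (hZ₀ : Z₀ ≠ 0)
    (hcovA : ∀ w₁ ∈ W, ∀ w₂ ∈ W, w₁ < w₂ → ∃ z, Z₀ z ≠ 0 ∧ w₁ < z ∧ z < w₂)
    (hcovB : ∃ z, Z₀ z ≠ 0 ∧ ∀ w ∈ W, z < w)
    (hcovC : ∃ z, Z₀ z ≠ 0 ∧ ∀ w ∈ W, w < z)
    (c : ℝ) (hc : c = Z₀.support.max' (Finsupp.support_nonempty_iff.mpr hZ₀))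
    (X Y : ℝ →₀ ℕ) (hX : X ≠ 0) (hY : Y ≠ 0)
    (hXW : ∀ w : ℝ, X w ≠ 0 → w ∈ W) (hYW : ∀ w : ℝ, Y w ≠ 0 → w ∈ W)
    (hCLL : CLLBetter c X Y) :
    ∃ N : ℕ, ∀ n : ℕ, n ≥ N → V (X + n • Z₀) > V (Y + n • Z₀) := by
  unfold CLLBetter at hCLL
  set m := max (psize X) (psize Y) with hm
  obtain ⟨k, hkm, hpre, hgt⟩ := hCLL
  set RX := ranked (padTo X m c) with hRXdef
  set RY := ranked (padTo Y m c) with hRYdef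
  set a : ℝ := RX.getD k 0 with hadef
  set b : ℝ := RY.getD k 0 with hbdef
  have hba : b < a := hgt
  -- c facts
  have hZc : ∀ z ∈ Z₀.support, z ≤ c := fun z hz => hc ▸ Finset.le_max' _ z hz
  have hcsupp : c ∈ Z₀.support := by rw [hc]; exact Finset.max'_mem _ _
  have hcW : ∀ w ∈ W, w < c := by
    obtain ⟨z, hz1, hz2⟩ := hcovC
    intro w hw
    exact lt_of_lt_of_le (hz2 w hw) (hZc z (Finsupp.mem_support_iff.mpr hz1))
  -- lengths
  have hmX : psize X ≤ m := le_max_left _ _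
  have hmY : psize Y ≤ m := le_max_right _ _
  have hlenRX : RX.length = m := by
    rw [hRXdef, ranked_length, padTo, psize_add, psize_single]; omega
  have hlenRY : RY.length = m := by
    rw [hRYdef, ranked_length, padTo, psize_add, psize_single]; omega
  have hRXs : RX.Pairwise (· ≤ ·) := ranked_sorted _
  have hRYs : RY.Pairwise (· ≤ ·) := ranked_sorted _
  -- supports
  have hsuppPad : ∀ (A : ℝ →₀ ℕ), (padTo A m c).support ⊆ A.support ∪ {c} := by
    intro A
    refine subset_trans Finsupp.support_add ?_
    exact Finset.union_subset_union_right Finsupp.support_single_subset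
  have haRX : a ∈ RX := by
    rw [hadef, List.getD_eq_getElem RX 0 (by omega)]
    exact List.getElem_mem _
  have hbRY : b ∈ RY := by
    rw [hbdef, List.getD_eq_getElem RY 0 (by omega)]
    exact List.getElem_mem _
  have hasupp : a ∈ X.support ∪ {c} := hsuppPad X (mem_ranked.mp haRX)
  have hbsupp : b ∈ Y.support ∪ {c} := hsuppPad Y (mem_ranked.mp hbRY)
  have halec : a ≤ c := by
    rcases Finset.mem_union.mp hasupp with h | h
    · exact le_of_lt (hcW _ (hXW _ (Finsupp.mem_support_iff.mp h)))
    · exact le_of_eq (Finset.mem_singleton.mp h)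
  have hbY : b ∈ Y.support := by
    rcases Finset.mem_union.mp hbsupp with h | h
    · exact h
    · exfalso; rw [Finset.mem_singleton.mp h] at hba; linarith
  have hbW : b ∈ W := hYW _ (Finsupp.mem_support_iff.mp hbY)
  -- the Z-level between b and a
  obtain ⟨z', hz'supp, hz'b, hz'a⟩ :
      ∃ z', z' ∈ Z₀.support ∧ b < z' ∧ z' ≤ a := by
    by_cases hac : a = c
    · exact ⟨c, hcsupp, hac ▸ hba, hac.ge⟩
    · have haX : a ∈ X.support := by
        rcases Finset.mem_union.mp hasupp with h | h
        · exact h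
        · exact absurd (Finset.mem_singleton.mp h) hac
      obtain ⟨z, hz1, hz2, hz3⟩ :=
        hcovA b hbW a (hXW _ (Finsupp.mem_support_iff.mp haX)) hba
      exact ⟨z, Finsupp.mem_support_iff.mpr hz1, hz2, hz3.le⟩
  -- grid
  set S : Finset ℝ := ((X.support ∪ Y.support) ∪ Z₀.support) ∪ {c} with hSdef
  set SL : List ℝ := S.sort (· ≤ ·) with hSLdef
  have hSLlt : SL.Pairwise (· < ·) := (Finset.sortedLT_sort S).pairwise
  have hSLle : SL.Pairwise (· ≤ ·) := Finset.pairwise_sort S _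
  have hmemS : ∀ x ∈ S, x ∈ SL := fun x hx => (Finset.mem_sort _).mpr hx
  have hXS : X.support ⊆ S := by
    intro x hx
    exact Finset.mem_union_left _ (Finset.mem_union_left _ (Finset.mem_union_left _ hx))
  have hYS : Y.support ⊆ S := by
    intro x hx
    exact Finset.mem_union_left _ (Finset.mem_union_left _ (Finset.mem_union_right _ hx))
  have hZS : Z₀.support ⊆ S := by
    intro x hx
    exact Finset.mem_union_left _ (Finset.mem_union_right _ hx)
  have hcS : c ∈ S := Finset.mem_union_right _ (Finset.mem_singleton_self c)
  have haS : a ∈ S := by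
    rcases Finset.mem_union.mp hasupp with h | h
    · exact hXS h
    · rw [Finset.mem_singleton.mp h]; exact hcS
  have hbS : b ∈ S := hYS hbY
  -- index of b in the grid
  obtain ⟨tb, htb⟩ := List.mem_iff_get.mp (hmemS b hbS)
  obtain ⟨ta, hta⟩ := List.mem_iff_get.mp (hmemS a haS)
  have htab : tb < ta := by
    have := hSLlt.sortedLT.strictMono_get.lt_iff_lt (a := tb) (b := ta)
    rw [htb, hta] at this
    exact this.mp hba
  set ib := tb.1 with hibdef
  have hibp : ib < SL.length - 1 := by
    have h1 : ta.1 < SL.length := ta.2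
    have h2 : tb.1 < ta.1 := htab
    omega
  have hibv : SL.getD ib 0 = b := by
    rw [List.getD_eq_getElem SL 0 (by have := tb.2; omega)]
    exact htb
  -- Z counts
  set zA := (ranked Z₀).countP (fun x => decide (x ≤ a)) with hzAdef
  have hczb : (ranked Z₀).countP (fun x => decide (x ≤ b)) < zA := by
    rw [hzAdef]
    apply countP_lt_countP (x := z')
    · intro x _ h
      simp only [decide_eq_true_eq] at h ⊢
      linarith
    · exact mem_ranked.mpr hz'supp
    · simp only [decide_eq_true_eq]; exact hz'a
    · simp only [decide_eq_true_eq]; exact not_le.mpr hz'b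
  have hzA1 : 1 ≤ zA := by omega
  have hzAZ : zA ≤ psize Z₀ := by
    rw [hzAdef, ← ranked_length]
    exact List.countP_le_length
  -- constants
  set Cβ : ℝ := (1 - β)⁻¹ with hCβdef
  have hCβ : 0 < Cβ := by rw [hCβdef]; apply inv_pos.mpr; linarith
  set gapb : ℝ := SL.getD (ib+1) 0 - SL.getD ib 0 with hgapbdef
  have hgapnn : ∀ i, i < SL.length - 1 → 0 ≤ SL.getD (i+1) 0 - SL.getD i 0 := by
    intro i hi
    have := sorted_getD_mono hSLle (Nat.le_succ i) (by omega)
    linarith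
  have hgapb : 0 < gapb := by
    rw [hgapbdef, List.getD_eq_getElem SL 0 (by omega), List.getD_eq_getElem SL 0 (by omega)]
    have : SL.get ⟨ib, by omega⟩ < SL.get ⟨ib+1, by omega⟩ :=
      hSLlt.sortedLT.strictMono_get (by simp)
    simp only [List.get_eq_getElem] at this
    linarith
  set B0 : ℝ := ∑ i ∈ Finset.range (SL.length - 1), (SL.getD (i+1) 0 - SL.getD i 0) with hB0def
  have hB0 : 0 ≤ B0 :=
    Finset.sum_nonneg fun i hi => hgapnn i (Finset.mem_range.mp hi)
  set KK : ℝ := Cβ * B0 + 2 * |c| * Cβ with hKKdef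
  have hKK : 0 ≤ KK := by
    rw [hKKdef]
    have : (0:ℝ) ≤ |c| := abs_nonneg c
    nlinarith
  -- the key quantitative bound
  have key : ∀ n : ℕ, V (X + n • Z₀) - V (Y + n • Z₀) ≥
      β^(n*(zA-1)) * (gapb * β^m - KK * β^n) := by
    intro n
    set M' := m + n * psize Z₀ with hM'
    set Xn := padTo X m c + n • Z₀ with hXndef
    set Yn := padTo Y m c + n • Z₀ with hYndef
    have hlenXn : (ranked Xn).length = M' := by
      rw [hXndef, ranked_length, psize_add, psize_nsmul, padTo, psize_add, psize_single]
      omega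
    have hlenYn : (ranked Yn).length = M' := by
      rw [hYndef, ranked_length, psize_add, psize_nsmul, padTo, psize_add, psize_single]
      omega
    have hlen1 : (ranked (X + n • Z₀)).length = psize X + n * psize Z₀ := by
      rw [ranked_length, psize_add, psize_nsmul]
    have hlen1Y : (ranked (Y + n • Z₀)).length = psize Y + n * psize Z₀ := by
      rw [ranked_length, psize_add, psize_nsmul]
    -- elements of the unpadded merged populations are ≤ c
    have hXc : ∀ x ∈ ranked (X + n • Z₀), x ≤ c := by
      intro x hx
      rcases Finset.mem_union.mp (Finsupp.support_add (mem_ranked.mp hx)) with h | h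
      · exact le_of_lt (hcW _ (hXW _ (Finsupp.mem_support_iff.mp h)))
      · exact hZc _ (support_nsmul_subset Z₀ n h)
    have hYc : ∀ x ∈ ranked (Y + n • Z₀), x ≤ c := by
      intro x hx
      rcases Finset.mem_union.mp (Finsupp.support_add (mem_ranked.mp hx)) with h | h
      · exact le_of_lt (hcW _ (hYW _ (Finsupp.mem_support_iff.mp h)))
      · exact hZc _ (support_nsmul_subset Z₀ n h)
    -- padded merged lists are unpadded ones with c's appended
    have hrankXn : ranked Xn = ranked (X + n • Z₀) ++ List.replicate (m - psize X) c := by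
      have heq : Xn = (X + n • Z₀) + Finsupp.single c (m - psize X) := by
        rw [hXndef, padTo]; exact add_right_comm _ _ _
      rw [heq]; exact ranked_pad _ _ _ hXc
    have hrankYn : ranked Yn = ranked (Y + n • Z₀) ++ List.replicate (m - psize Y) c := by
      have heq : Yn = (Y + n • Z₀) + Finsupp.single c (m - psize Y) := by
        rw [hYndef, padTo]; exact add_right_comm _ _ _
      rw [heq]; exact ranked_pad _ _ _ hYc
    -- value decomposition
    have hVXn : (∑ j ∈ Finset.range M', β^(j+1) * (ranked Xn).getD j 0)
        = V (X + n • Z₀) + c * Gg β (psize X + n * psize Z₀) M' := by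
      have h := T_append β c (m - psize X) (ranked (X + n • Z₀))
      rw [hlen1] at h
      have hputs : psize X + n * psize Z₀ + (m - psize X) = M' := by omega
      rw [hputs] at h
      rw [hrankXn, h, hV]
      simp only [vrd]
      rw [hlen1]
    have hVYn : (∑ j ∈ Finset.range M', β^(j+1) * (ranked Yn).getD j 0)
        = V (Y + n • Z₀) + c * Gg β (psize Y + n * psize Z₀) M' := by
      have h := T_append β c (m - psize Y) (ranked (Y + n • Z₀))
      rw [hlen1Y] at h
      have hputs : psize Y + n * psize Z₀ + (m - psize Y) = M' := by omega
      rw [hputs] at h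
      rw [hrankYn, h, hV]
      simp only [vrd]
      rw [hlen1Y]
    -- memberships in the grid
    have hmemXn : ∀ x ∈ ranked Xn, x ∈ SL := by
      intro x hx
      apply hmemS
      rcases Finset.mem_union.mp (Finsupp.support_add (mem_ranked.mp hx)) with h | h
      · rcases Finset.mem_union.mp (hsuppPad X h) with h' | h'
        · exact hXS h'
        · rw [Finset.mem_singleton.mp h']; exact hcS
      · exact hZS (support_nsmul_subset Z₀ n h)
    have hmemYn : ∀ x ∈ ranked Yn, x ∈ SL := by
      intro x hx
      apply hmemS
      rcases Finset.mem_union.mp (Finsupp.support_add (mem_ranked.mp hx)) with h | h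
      · rcases Finset.mem_union.mp (hsuppPad Y h) with h' | h'
        · exact hYS h'
        · rw [Finset.mem_singleton.mp h']; exact hcS
      · exact hZS (support_nsmul_subset Z₀ n h)
    -- layer decomposition
    have hLX := layer (β := β) hSLlt (ranked_sorted Xn) hmemXn
    have hLY := layer (β := β) hSLlt (ranked_sorted Yn) hmemYn
    rw [hlenXn] at hLX
    rw [hlenYn] at hLY
    have hdiff : (∑ j ∈ Finset.range M', β^(j+1) * (ranked Xn).getD j 0)
        - (∑ j ∈ Finset.range M', β^(j+1) * (ranked Yn).getD j 0)
      = ∑ i ∈ Finset.range (SL.length - 1),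
          (SL.getD (i+1) 0 - SL.getD i 0) *
            (Gg β ((ranked Xn).countP (fun x => decide (x ≤ SL.getD i 0))) M'
             - Gg β ((ranked Yn).countP (fun x => decide (x ≤ SL.getD i 0))) M') := by
      rw [hLX, hLY, add_sub_add_left_eq_sub, ← Finset.sum_sub_distrib]
      apply Finset.sum_congr rfl
      intro i _
      ring
    -- counts on merged lists
    have hcntX : ∀ s : ℝ, (ranked Xn).countP (fun x => decide (x ≤ s))
        = RX.countP (fun x => decide (x ≤ s))
          + n * (ranked Z₀).countP (fun x => decide (x ≤ s)) := by
      intro s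
      rw [hXndef, countP_ranked_add, countP_ranked_nsmul]
    have hcntY : ∀ s : ℝ, (ranked Yn).countP (fun x => decide (x ≤ s))
        = RY.countP (fun x => decide (x ≤ s))
          + n * (ranked Z₀).countP (fun x => decide (x ≤ s)) := by
      intro s
      rw [hYndef, countP_ranked_add, countP_ranked_nsmul]
    -- pointwise bound
    have hpoint : ∀ i ∈ Finset.range (SL.length - 1),
        (if i = ib then gapb * β^(m + n*(zA-1)) else 0)
          - (SL.getD (i+1) 0 - SL.getD i 0) * (Cβ * β^(n*zA))
        ≤ (SL.getD (i+1) 0 - SL.getD i 0) *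
            (Gg β ((ranked Xn).countP (fun x => decide (x ≤ SL.getD i 0))) M'
             - Gg β ((ranked Yn).countP (fun x => decide (x ≤ SL.getD i 0))) M') := by
      intro i hi
      have hi' := Finset.mem_range.mp hi
      have hgapi : 0 ≤ SL.getD (i+1) 0 - SL.getD i 0 := hgapnn i hi'
      have hnn : 0 ≤ Cβ * β^(n*zA) := by positivity
      by_cases hib : i = ib
      · subst hib
        rw [if_pos rfl, ← hgapbdef, hibv, hcntX b, hcntY b]
        have h1 : RX.countP (fun x => decide (x ≤ b)) ≤ k := by
          by_contra hcon
          push_neg at hcon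
          have h2 := (sorted_countP_iff RX hRXs b k (by omega)).mpr hcon
          rw [← hadef] at h2
          linarith
        have h2 : k < RY.countP (fun x => decide (x ≤ b)) := by
          apply (sorted_countP_iff RY hRYs b k (by omega)).mp
          rw [← hbdef]
        have htXY : RX.countP (fun x => decide (x ≤ b)) + n * (ranked Z₀).countP (fun x => decide (x ≤ b))
            < RY.countP (fun x => decide (x ≤ b)) + n * (ranked Z₀).countP (fun x => decide (x ≤ b)) := by
          omega
        have htYM : RY.countP (fun x => decide (x ≤ b)) + n * (ranked Z₀).countP (fun x => decide (x ≤ b)) ≤ M' := by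
          rw [← hcntY b, ← hlenYn]; exact List.countP_le_length
        have hstep : β ^ (RY.countP (fun x => decide (x ≤ b)) + n * (ranked Z₀).countP (fun x => decide (x ≤ b)))
              + Gg β (RY.countP (fun x => decide (x ≤ b)) + n * (ranked Z₀).countP (fun x => decide (x ≤ b))) M'
            ≤ Gg β (RX.countP (fun x => decide (x ≤ b)) + n * (ranked Z₀).countP (fun x => decide (x ≤ b))) M' := by
          rw [← Gg_pred (by omega) htYM]
          exact Gg_mono hβ0.le (by omega) M'
        have hexp : RY.countP (fun x => decide (x ≤ b)) + n * (ranked Z₀).countP (fun x => decide (x ≤ b))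
            ≤ m + n * (zA - 1) := by
          have hc1 : RY.countP (fun x => decide (x ≤ b)) ≤ m := by
            rw [← hlenRY]; exact List.countP_le_length
          have hc2 : (ranked Z₀).countP (fun x => decide (x ≤ b)) ≤ zA - 1 := by omega
          have := Nat.mul_le_mul_left n hc2
          omega
        have hpw : β ^ (m + n*(zA-1))
            ≤ β ^ (RY.countP (fun x => decide (x ≤ b)) + n * (ranked Z₀).countP (fun x => decide (x ≤ b))) :=
          pow_le_pow_of_le_one hβ0.le hβ1.le hexp
        have hGg2 : 0 ≤ Gg β (RY.countP (fun x => decide (x ≤ b)) + n * (ranked Z₀).countP (fun x => decide (x ≤ b))) M' :=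
          Gg_nonneg hβ0.le _ _
        have hgd : β ^ (m + n*(zA-1))
            ≤ Gg β (RX.countP (fun x => decide (x ≤ b)) + n * (ranked Z₀).countP (fun x => decide (x ≤ b))) M'
              - Gg β (RY.countP (fun x => decide (x ≤ b)) + n * (ranked Z₀).countP (fun x => decide (x ≤ b))) M' := by
          linarith
        have hmm := mul_le_mul_of_nonneg_left hgd hgapb.le
        have hp := mul_nonneg hgapb.le hnn
        linarith
      · rw [if_neg hib, zero_sub, hcntX _, hcntY _]
        by_cases hsa : SL.getD i 0 < a
        · have h1 : RX.countP (fun x => decide (x ≤ SL.getD i 0))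
              ≤ RY.countP (fun x => decide (x ≤ SL.getD i 0)) := by
            apply countP_le_of_prefix hRXs hRYs (by omega) (by omega) hpre
            rw [← hadef]; exact hsa
          have h2 : Gg β (RY.countP (fun x => decide (x ≤ SL.getD i 0)) + n * (ranked Z₀).countP (fun x => decide (x ≤ SL.getD i 0))) M'
              ≤ Gg β (RX.countP (fun x => decide (x ≤ SL.getD i 0)) + n * (ranked Z₀).countP (fun x => decide (x ≤ SL.getD i 0))) M' :=
            Gg_mono hβ0.le (by omega) M'
          have hp1 := mul_nonneg hgapi hnn
          have hp2 := mul_nonneg hgapi (sub_nonneg.mpr h2)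
          linarith
        · push_neg at hsa
          have hzs : zA ≤ (ranked Z₀).countP (fun x => decide (x ≤ SL.getD i 0)) := by
            rw [hzAdef]
            apply List.countP_mono_left
            intro x _ hx
            simp only [decide_eq_true_eq] at hx ⊢
            linarith
          have htY : n * zA ≤ RY.countP (fun x => decide (x ≤ SL.getD i 0)) + n * (ranked Z₀).countP (fun x => decide (x ≤ SL.getD i 0)) := by
            have := Nat.mul_le_mul_left n hzs
            omega
          have hGy : Gg β (RY.countP (fun x => decide (x ≤ SL.getD i 0)) + n * (ranked Z₀).countP (fun x => decide (x ≤ SL.getD i 0))) M'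
              ≤ Cβ * β^(n*zA) := by
            calc Gg β (RY.countP (fun x => decide (x ≤ SL.getD i 0)) + n * (ranked Z₀).countP (fun x => decide (x ≤ SL.getD i 0))) M'
                ≤ β ^ (RY.countP (fun x => decide (x ≤ SL.getD i 0)) + n * (ranked Z₀).countP (fun x => decide (x ≤ SL.getD i 0))) * Cβ :=
                  Gg_le hβ0 hβ1 _ _
              _ ≤ β ^ (n*zA) * Cβ :=
                  mul_le_mul_of_nonneg_right (pow_le_pow_of_le_one hβ0.le hβ1.le htY) hCβ.le
              _ = Cβ * β^(n*zA) := mul_comm _ _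
          have hGx : 0 ≤ Gg β (RX.countP (fun x => decide (x ≤ SL.getD i 0)) + n * (ranked Z₀).countP (fun x => decide (x ≤ SL.getD i 0))) M' :=
            Gg_nonneg hβ0.le _ _
          have hd2 : -(Cβ * β^(n*zA))
              ≤ Gg β (RX.countP (fun x => decide (x ≤ SL.getD i 0)) + n * (ranked Z₀).countP (fun x => decide (x ≤ SL.getD i 0))) M'
                - Gg β (RY.countP (fun x => decide (x ≤ SL.getD i 0)) + n * (ranked Z₀).countP (fun x => decide (x ≤ SL.getD i 0))) M' := by
            linarith
          have hmm := mul_le_mul_of_nonneg_left hd2 hgapi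
          have hring : (SL.getD (i+1) 0 - SL.getD i 0) * -(Cβ * β^(n*zA))
              = -((SL.getD (i+1) 0 - SL.getD i 0) * (Cβ * β^(n*zA))) := by ring
          linarith
    -- summed bound
    have hsumbound : gapb * β^(m + n*(zA-1)) - B0 * (Cβ * β^(n*zA))
        ≤ ∑ i ∈ Finset.range (SL.length - 1),
          (SL.getD (i+1) 0 - SL.getD i 0) *
            (Gg β ((ranked Xn).countP (fun x => decide (x ≤ SL.getD i 0))) M'
             - Gg β ((ranked Yn).countP (fun x => decide (x ≤ SL.getD i 0))) M') := by
      have h1 := Finset.sum_le_sum hpoint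
      have h2 : ∑ i ∈ Finset.range (SL.length - 1),
          ((if i = ib then gapb * β^(m + n*(zA-1)) else 0)
            - (SL.getD (i+1) 0 - SL.getD i 0) * (Cβ * β^(n*zA)))
          = gapb * β^(m + n*(zA-1)) - B0 * (Cβ * β^(n*zA)) := by
        rw [Finset.sum_sub_distrib]
        congr 1
        · rw [Finset.sum_ite_eq' (Finset.range (SL.length - 1)) ib
            (fun _ => gapb * β^(m + n*(zA-1)))]
          rw [if_pos (Finset.mem_range.mpr hibp)]
        · rw [← Finset.sum_mul, ← hB0def]
      linarith
    -- corrections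
    have hcorrX : Gg β (psize X + n * psize Z₀) M' ≤ Cβ * β^(n*zA) := by
      calc Gg β (psize X + n * psize Z₀) M' ≤ β^(psize X + n * psize Z₀) * Cβ := Gg_le hβ0 hβ1 _ _
        _ ≤ β^(n*zA) * Cβ := by
            apply mul_le_mul_of_nonneg_right _ hCβ.le
            apply pow_le_pow_of_le_one hβ0.le hβ1.le
            have := Nat.mul_le_mul_left n hzAZ
            omega
        _ = Cβ * β^(n*zA) := mul_comm _ _
    have hcorrY : Gg β (psize Y + n * psize Z₀) M' ≤ Cβ * β^(n*zA) := by
      calc Gg β (psize Y + n * psize Z₀) M' ≤ β^(psize Y + n * psize Z₀) * Cβ := Gg_le hβ0 hβ1 _ _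
        _ ≤ β^(n*zA) * Cβ := by
            apply mul_le_mul_of_nonneg_right _ hCβ.le
            apply pow_le_pow_of_le_one hβ0.le hβ1.le
            have := Nat.mul_le_mul_left n hzAZ
            omega
        _ = Cβ * β^(n*zA) := mul_comm _ _
    have hGXnn : 0 ≤ Gg β (psize X + n * psize Z₀) M' := Gg_nonneg hβ0.le _ _
    have hGYnn : 0 ≤ Gg β (psize Y + n * psize Z₀) M' := Gg_nonneg hβ0.le _ _
    have habs : -(2 * |c| * (Cβ * β^(n*zA)))
        ≤ -(c * (Gg β (psize X + n * psize Z₀) M' - Gg β (psize Y + n * psize Z₀) M')) := by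
      have h1 : |c * (Gg β (psize X + n * psize Z₀) M' - Gg β (psize Y + n * psize Z₀) M')|
          ≤ |c| * (Gg β (psize X + n * psize Z₀) M' + Gg β (psize Y + n * psize Z₀) M') := by
        rw [abs_mul]
        apply mul_le_mul_of_nonneg_left _ (abs_nonneg c)
        refine (abs_sub _ _).trans ?_
        rw [abs_of_nonneg hGXnn, abs_of_nonneg hGYnn]
      have h3 := le_abs_self (c * (Gg β (psize X + n * psize Z₀) M' - Gg β (psize Y + n * psize Z₀) M'))
      have h4 : |c| * (Gg β (psize X + n * psize Z₀) M' + Gg β (psize Y + n * psize Z₀) M')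
          ≤ |c| * (2 * (Cβ * β^(n*zA))) := by
        apply mul_le_mul_of_nonneg_left _ (abs_nonneg c)
        linarith
      have hr : |c| * (2 * (Cβ * β^(n*zA))) = 2 * |c| * (Cβ * β^(n*zA)) := by ring
      linarith
    -- assemble
    have hVX' : V (X + n • Z₀)
        = (∑ j ∈ Finset.range M', β^(j+1) * (ranked Xn).getD j 0)
          - c * Gg β (psize X + n * psize Z₀) M' := eq_sub_of_add_eq hVXn.symm
    have hVY' : V (Y + n • Z₀)
        = (∑ j ∈ Finset.range M', β^(j+1) * (ranked Yn).getD j 0)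
          - c * Gg β (psize Y + n * psize Z₀) M' := eq_sub_of_add_eq hVYn.symm
    have hnzA : n * zA = n * (zA - 1) + n := by
      conv_lhs => rw [← Nat.sub_add_cancel hzA1]
      rw [Nat.mul_add, Nat.mul_one]
    have hEq : β^(n*(zA-1)) * (gapb * β^m - KK * β^n)
        = gapb * β^(m + n*(zA-1)) - KK * β^(n*zA) := by
      rw [hnzA, pow_add, pow_add]
      ring
    have hKKP : KK * β^(n*zA) = B0 * (Cβ * β^(n*zA)) + 2 * |c| * (Cβ * β^(n*zA)) := by
      rw [hKKdef]; ring
    rw [ge_iff_le, hEq, hVX', hVY']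
    linarith [hdiff, hsumbound, habs, hKKP]
  -- choose N
  obtain ⟨N, hN⟩ := exists_pow_lt_of_lt_one
    (show (0:ℝ) < gapb * β^m / (KK+1) by positivity) hβ1
  refine ⟨N, fun n hn => ?_⟩
  have h1 : β^n ≤ β^N := pow_le_pow_of_le_one hβ0.le hβ1.le hn
  have h4 : (KK+1) * β^N < gapb * β^m := by
    rw [← lt_div_iff₀' (by linarith)]
    exact hN
  have h2 : KK * β^n < gapb * β^m := by
    have hbn : (0:ℝ) ≤ β^N := pow_nonneg hβ0.le N
    nlinarith
  have h5 := key n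
  have h6 : 0 < β^(n*(zA-1)) * (gapb * β^m - KK * β^n) :=
    mul_pos (pow_pos hβ0 _) (by linarith)
  linarith
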